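/- Let n ≥ 1 and q ≥ 1 be natural numbers. Let σ₁, ..., σₙ, ε be i.i.d. Rademacher random variables (taking values ±1 with probability 1/2 each) that are independent of the random vector (A₁, ..., Aₙ, B), where A₁, ..., Aₙ, B are nonnegative real random variables with finite 2q-th moments. Set X = Σ_{k=1}^n σₖ Aₖ + ε B. Then E[X^{2q}] ≥ Σ_{k=1}^n E[Aₖ^{2q}] + E[B^{2q}]. -/

import Mathlib

open MeasureTheory ProbabilityTheory Finset

set_option maxHeartbeats 1000000

/-- Law of a Rademacher random variable: `±1` with probability `1/2` each. -/
noncomputable def rademacherLaw : Measure ℝ :=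
  (2 : ENNReal)⁻¹ • Measure.dirac 1 + (2 : ENNReal)⁻¹ • Measure.dirac (-1)

instance : IsProbabilityMeasure rademacherLaw :=
  ⟨by simp [rademacherLaw, ENNReal.inv_two_add_inv_two]⟩

lemma key_ineq (q : ℕ) (hq : 1 ≤ q) (a b : ℝ) :
    2 * (a ^ (2*q) + b ^ (2*q)) ≤ (a + b) ^ (2*q) + (a - b) ^ (2*q) := by
  have h1 : (a + b) ^ (2*q) = ∑ k ∈ range (2*q+1), a ^ k * b ^ (2*q - k) * (2*q).choose k := add_pow a b (2*q)
  have h2 : (a - b) ^ (2*q) = ∑ k ∈ range (2*q+1), a ^ k * (-b) ^ (2*q - k) * (2*q).choose k := by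
    rw [sub_eq_add_neg]; exact add_pow a (-b) (2*q)
  rw [h1, h2, ← Finset.sum_add_distrib]
  have hsub : ({0, 2*q} : Finset ℕ) ⊆ range (2*q+1) := by
    intro x hx; simp at hx; rcases hx with h | h <;> simp [h]
  have hnonneg : ∀ k ∈ range (2*q+1), 0 ≤ a ^ k * b ^ (2*q - k) * (2*q).choose k + a ^ k * (-b) ^ (2*q - k) * (2*q).choose k := by
    intro k hk
    simp only [mem_range] at hk
    rcases Nat.even_or_odd (2*q - k) with he | ho
    · have hke : Even k := by
        have h2q : Even (2*q) := even_two_mul q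
        rw [Nat.even_iff] at *
        omega
      rw [he.neg_pow]
      have ha : (0:ℝ) ≤ a ^ k := hke.pow_nonneg a
      have hb : (0:ℝ) ≤ b ^ (2*q - k) := he.pow_nonneg b
      positivity
    · rw [ho.neg_pow]
      have : a ^ k * -b ^ (2*q - k) * ((2*q).choose k : ℝ) = -(a ^ k * b ^ (2*q - k) * ((2*q).choose k : ℝ)) := by ring
      rw [this]
      simp
  have hle := Finset.sum_le_sum_of_subset_of_nonneg hsub (fun i hi _ => hnonneg i hi)
  refine le_trans (le_of_eq ?_) hle
  rw [Finset.sum_pair (by omega : 0 ≠ 2*q)]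
  have he : Even (2*q) := even_two_mul q
  simp only [Nat.sub_zero, Nat.sub_self, pow_zero, Nat.choose_self, Nat.choose_zero_right,
    Nat.cast_one, he.neg_pow, one_mul, mul_one]
  ring

lemma avg_ineq (q : ℕ) (hq : 1 ≤ q) : ∀ (m : ℕ) (c : Fin m → ℝ) (r : ℝ),
    (∑ i, c i ^ (2*q) + r ^ (2*q)) * 2 ^ m ≤
      ∑ s : Fin m → Bool, (r + ∑ i, (if s i then (1:ℝ) else -1) * c i) ^ (2*q) := by
  intro m
  induction m with
  | zero => intro c r; simp
  | succ m ih =>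
    intro c r
    have hre : ∑ s : Fin (m+1) → Bool, (r + ∑ i, (if s i then (1:ℝ) else -1) * c i) ^ (2*q)
        = ∑ p : Bool × (Fin m → Bool), (r + ∑ i, (if (Fin.cons p.1 p.2 : Fin (m+1) → Bool) i then (1:ℝ) else -1) * c i) ^ (2*q) := by
      exact (Fintype.sum_equiv (Fin.consEquiv (fun _ => Bool)) _ _ (fun p => by rfl)).symm
    rw [hre, Fintype.sum_prod_type]
    have hinner : ∀ (b : Bool) (s : Fin m → Bool),
        r + ∑ i, (if (Fin.cons b s : Fin (m+1) → Bool) i then (1:ℝ) else -1) * c i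
        = (r + (if b then (1:ℝ) else -1) * c 0) + ∑ i, (if s i then (1:ℝ) else -1) * c i.succ := by
      intro b s
      rw [Fin.sum_univ_succ]
      simp [Fin.cons_zero, Fin.cons_succ]
      ring
    simp only [hinner]
    have hIH : ∀ b : Bool,
        (∑ i : Fin m, c i.succ ^ (2*q) + (r + (if b then (1:ℝ) else -1) * c 0) ^ (2*q)) * 2 ^ m ≤
        ∑ s : Fin m → Bool, ((r + (if b then (1:ℝ) else -1) * c 0) + ∑ i, (if s i then (1:ℝ) else -1) * c i.succ) ^ (2*q) :=
      fun b => ih (fun i => c i.succ) _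
    rw [Fintype.sum_bool]
    refine le_trans ?_ (add_le_add (hIH true) (hIH false))
    have hkey := key_ineq q hq r (c 0)
    have h2m : (0:ℝ) < 2 ^ m := by positivity
    have hsum : ∑ i : Fin (m+1), c i ^ (2*q) = c 0 ^ (2*q) + ∑ i : Fin m, c i.succ ^ (2*q) :=
      Fin.sum_univ_succ _
    rw [hsum]
    have ht : (if true then (1:ℝ) else -1) = 1 := rfl
    have hf : (if false then (1:ℝ) else -1) = -1 := rfl
    rw [ht, hf]
    have : r + 1 * c 0 = r + c 0 := by ring
    rw [this]
    have : r + (-1) * c 0 = r - c 0 := by ring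
    rw [this]
    rw [pow_succ]
    nlinarith [mul_le_mul_of_nonneg_right hkey h2m.le]

lemma avg_ineq' {ι : Type*} [Fintype ι] [DecidableEq ι] (q : ℕ) (hq : 1 ≤ q) (c : ι → ℝ) :
    (∑ i, c i ^ (2*q)) * 2 ^ (Fintype.card ι) ≤
      ∑ s : ι → Bool, (∑ i, (if s i then (1:ℝ) else -1) * c i) ^ (2*q) := by
  set m := Fintype.card ι with hm
  set e := Fintype.equivFin ι with he
  have h := avg_ineq q hq m (fun j => c (e.symm j)) 0
  rw [zero_pow (by omega : 2*q ≠ 0), add_zero] at h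
  have h1 : ∑ i : ι, c i ^ (2*q) = ∑ j : Fin m, c (e.symm j) ^ (2*q) :=
    Fintype.sum_equiv e _ _ (fun i => by rw [Equiv.symm_apply_apply])
  have h2 : ∑ s : Fin m → Bool, ((0:ℝ) + ∑ j, (if s j then (1:ℝ) else -1) * c (e.symm j)) ^ (2*q)
      = ∑ t : ι → Bool, (∑ i, (if t i then (1:ℝ) else -1) * c i) ^ (2*q) := by
    refine Fintype.sum_equiv (Equiv.arrowCongr e.symm (Equiv.refl Bool)) _ _ (fun s => ?_)
    rw [zero_add]
    congr 1
    refine Fintype.sum_equiv e.symm _ _ (fun j => ?_)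
    simp [Equiv.arrowCongr]
  rw [h1, ← h2]
  exact h

lemma pi_rademacher {ι : Type*} [Fintype ι] [DecidableEq ι] :
    (Measure.pi (fun _ : ι => rademacherLaw)) =
      ∑ s : ι → Bool, ((2:ENNReal)⁻¹ ^ (Fintype.card ι)) •
        Measure.dirac (fun i => if s i then (1:ℝ) else -1) := by
  classical
  refine Measure.pi_eq (fun t ht => ?_)
  have hmeas : MeasurableSet (Set.univ.pi t) := MeasurableSet.univ_pi ht
  rw [Measure.finset_sum_apply]
  simp only [Measure.smul_apply, Measure.dirac_apply' _ hmeas, smul_eq_mul]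
  have hrad : ∀ i, rademacherLaw (t i)
      = ∑ b : Bool, (2:ENNReal)⁻¹ * (if (if b then (1:ℝ) else -1) ∈ t i then 1 else 0) := by
    intro i
    rw [Fintype.sum_bool]
    simp only [if_true, if_false]
    rw [rademacherLaw, Measure.add_apply, Measure.smul_apply, Measure.smul_apply,
      Measure.dirac_apply' _ (ht i), Measure.dirac_apply' _ (ht i)]
    simp [Set.indicator_apply]
  calc ∑ s : ι → Bool, (2:ENNReal)⁻¹ ^ (Fintype.card ι) *
        Set.indicator (Set.univ.pi t) 1 (fun i => if s i then (1:ℝ) else -1)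
      = ∑ s : ι → Bool, ∏ i : ι, ((2:ENNReal)⁻¹ * (if (if s i then (1:ℝ) else -1) ∈ t i then 1 else 0)) := by
        refine Finset.sum_congr rfl (fun s _ => ?_)
        rw [Finset.prod_mul_distrib, Finset.prod_const, Finset.prod_boole]
        rw [Set.indicator_apply]
        congr 1
        by_cases h : (fun i => if s i then (1:ℝ) else -1) ∈ Set.univ.pi t
        · rw [if_pos h, if_pos (by intro i _; exact h i (Set.mem_univ i))]; rfl
        · rw [if_neg h, if_neg (by intro hc; exact h (fun i _ => hc i (Finset.mem_univ i)))]
    _ = ∏ i : ι, ∑ b : Bool, (2:ENNReal)⁻¹ * (if (if b then (1:ℝ) else -1) ∈ t i then 1 else 0) := by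
        rw [Finset.prod_univ_sum]
        rw [Fintype.piFinset_univ]
    _ = ∏ i : ι, rademacherLaw (t i) := by
        exact Finset.prod_congr rfl (fun i _ => (hrad i).symm)

lemma ofReal_pow_eq (q : ℕ) (x : ℝ) :
    ENNReal.ofReal (x ^ (2*q)) = (‖x‖₊ : ENNReal) ^ (2*q) := by
  rw [← (even_two_mul q).pow_abs, ENNReal.ofReal_pow (abs_nonneg x),
    ← Real.enorm_eq_ofReal_abs]
  rfl

lemma lintegral_pow_lt_top {Ω : Type*} [MeasurableSpace Ω] {μ : Measure Ω}
    (q : ℕ) (hq : 1 ≤ q) {f : Ω → ℝ} (h : MemLp f (2*q : ℕ) μ) :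
    ∫⁻ ω, ENNReal.ofReal (f ω ^ (2*q)) ∂μ < ⊤ := by
  simp_rw [ofReal_pow_eq q]
  have hne : ((2*q : ℕ) : ENNReal) ≠ 0 := by
    simp; omega
  have h2 := lintegral_rpow_enorm_lt_top_of_eLpNorm_lt_top hne (by simp [ENNReal.mul_eq_top]) h.2
  have : ((2*q : ℕ) : ENNReal).toReal = ((2*q : ℕ) : ℝ) := by simp
  rw [this] at h2
  simp_rw [← ENNReal.rpow_natCast]
  exact h2

lemma map_fun_eq_pi {Ω ι : Type*} [MeasurableSpace Ω] [Fintype ι] {μ : Measure Ω}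
    [IsProbabilityMeasure μ] {f : ι → Ω → ℝ} (hm : ∀ i, Measurable (f i))
    (h : iIndepFun f μ) :
    μ.map (fun ω i => f i ω) = Measure.pi (fun i => μ.map (f i)) := by
  haveI : ∀ i, IsProbabilityMeasure (μ.map (f i)) :=
    fun i => Measure.isProbabilityMeasure_map (hm i).aemeasurable
  symm
  refine Measure.pi_eq (fun t ht => ?_)
  rw [Measure.map_apply (measurable_pi_lambda _ hm) (MeasurableSet.univ_pi ht)]
  have hpre : (fun ω i => f i ω) ⁻¹' (Set.univ.pi t) = ⋂ i ∈ Finset.univ, f i ⁻¹' t i := by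
    ext ω
    simp [Set.mem_univ_pi, Set.mem_iInter]
  rw [hpre, h.measure_inter_preimage_eq_mul Finset.univ (fun i _ => ht i)]
  exact Finset.prod_congr rfl fun i _ =>
    (Measure.map_apply (hm i) (ht i)).symm

theorem moment_lower_bound_signed_sum {Ω : Type*} [MeasurableSpace Ω] (μ : Measure Ω)
    [IsProbabilityMeasure μ] (n q : ℕ) (hn : 1 ≤ n) (hq : 1 ≤ q)
    (σ : Fin n → Ω → ℝ) (ε : Ω → ℝ) (A : Fin n → Ω → ℝ) (B : Ω → ℝ)
    (hσm : ∀ k, Measurable (σ k)) (hεm : Measurable ε)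
    (hAm : ∀ k, Measurable (A k)) (hBm : Measurable B)
    (hA0 : ∀ k, ∀ᵐ ω ∂μ, 0 ≤ A k ω) (hB0 : ∀ᵐ ω ∂μ, 0 ≤ B ω)
    (hALp : ∀ k, MemLp (A k) (2 * q : ℕ) μ) (hBLp : MemLp B (2 * q : ℕ) μ)
    -- each of σ₁, …, σₙ, ε is Rademacher distributed
    (hrad : ∀ i : Option (Fin n), μ.map (Option.elim i ε σ) = rademacherLaw)
    -- the family (σ₁, …, σₙ, ε) is mutually independent
    (hiid : iIndepFun (fun i : Option (Fin n) => Option.elim i ε σ) μ)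
    -- and independent of the vector (A₁, …, Aₙ, B)
    (hindep : IndepFun (fun ω (i : Option (Fin n)) => Option.elim i ε σ ω)
      (fun ω => ((fun k => A k ω), B ω)) μ) :
    ∑ k, ∫ ω, (A k ω) ^ (2 * q) ∂μ + ∫ ω, (B ω) ^ (2 * q) ∂μ ≤
      ∫ ω, (∑ k, σ k ω * A k ω + ε ω * B ω) ^ (2 * q) ∂μ := by
  classical
  -- measurability of the sign vector and the (A, B) vector
  have hm : ∀ i : Option (Fin n), Measurable (Option.elim i ε σ) := by
    intro i; cases i with
    | none => exact hεm
    | some k => exact hσm k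
  have hFm : Measurable (fun ω (i : Option (Fin n)) => Option.elim i ε σ ω) :=
    measurable_pi_lambda _ hm
  have hGm : Measurable (fun ω => ((fun k => A k ω), B ω)) :=
    (measurable_pi_lambda _ hAm).prodMk hBm
  have hmapF : μ.map (fun ω (i : Option (Fin n)) => Option.elim i ε σ ω)
      = Measure.pi (fun _ : Option (Fin n) => rademacherLaw) := by
    rw [map_fun_eq_pi hm hiid]
    congr 1
    exact funext hrad
  have hmappair := (indepFun_iff_map_prod_eq_prod_map_map hFm.aemeasurable hGm.aemeasurable).mp hindep
  set ν := μ.map (fun ω => ((fun k => A k ω), B ω)) with hν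
  haveI : IsProbabilityMeasure ν := Measure.isProbabilityMeasure_map hGm.aemeasurable
  -- measurability of integrands
  have hg0m : Measurable (fun p : (Option (Fin n) → ℝ) × ((Fin n → ℝ) × ℝ) =>
      (∑ k, p.1 (some k) * p.2.1 k + p.1 none * p.2.2) ^ (2*q)) := by
    apply Measurable.pow_const
    apply Measurable.add
    · apply Finset.measurable_sum
      intro k _
      exact ((measurable_pi_apply (some k)).comp measurable_fst).mul
        ((measurable_pi_apply k).comp (measurable_fst.comp measurable_snd))
    · exact ((measurable_pi_apply none).comp measurable_fst).mul
        (measurable_snd.comp measurable_snd)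
  have hXpm : Measurable (fun ω => (∑ k, σ k ω * A k ω + ε ω * B ω) ^ (2*q)) :=
    hg0m.comp (hFm.prodMk hGm)
  -- the pointwise inner bound over the pi Rademacher measure
  have hinner : ∀ y : (Fin n → ℝ) × ℝ,
      ENNReal.ofReal (∑ k, y.1 k ^ (2*q) + y.2 ^ (2*q))
        ≤ ∫⁻ x, ENNReal.ofReal ((∑ k, x (some k) * y.1 k + x none * y.2) ^ (2*q))
            ∂(Measure.pi (fun _ : Option (Fin n) => rademacherLaw)) := by
    intro y
    rw [pi_rademacher, lintegral_finset_sum_measure]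
    simp only [lintegral_smul_measure]
    have hdirac : ∀ s : Option (Fin n) → Bool,
        ∫⁻ x, ENNReal.ofReal ((∑ k, x (some k) * y.1 k + x none * y.2) ^ (2*q))
          ∂(Measure.dirac (fun i => if s i then (1:ℝ) else -1))
        = ENNReal.ofReal ((∑ k, (if s (some k) then (1:ℝ) else -1) * y.1 k
            + (if s none then (1:ℝ) else -1) * y.2) ^ (2*q)) := by
      intro s
      exact lintegral_dirac' _
        (ENNReal.measurable_ofReal.comp (hg0m.comp (measurable_id.prodMk measurable_const)))
    simp only [hdirac]
    set c : Option (Fin n) → ℝ := fun i => Option.elim i y.2 y.1 with hc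
    set N := Fintype.card (Option (Fin n)) with hN
    have hkey := avg_ineq' q hq c
    have hsum1 : ∑ k, y.1 k ^ (2*q) + y.2 ^ (2*q) = ∑ i : Option (Fin n), c i ^ (2*q) := by
      rw [Fintype.sum_option, add_comm]
      rfl
    have hsum2 : ∀ s : Option (Fin n) → Bool,
        (∑ k, (if s (some k) then (1:ℝ) else -1) * y.1 k + (if s none then (1:ℝ) else -1) * y.2)
        = ∑ i : Option (Fin n), (if s i then (1:ℝ) else -1) * c i := by
      intro s
      rw [Fintype.sum_option, add_comm]
      rfl
    simp only [hsum2]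
    rw [hsum1]
    have h2N : (0:ℝ) < 2 ^ N := by positivity
    have hreal : ∑ i : Option (Fin n), c i ^ (2*q)
        ≤ (2⁻¹:ℝ) ^ N * ∑ s : Option (Fin n) → Bool,
            (∑ i, (if s i then (1:ℝ) else -1) * c i) ^ (2*q) := by
      rw [inv_pow, inv_mul_eq_div, le_div_iff₀ h2N]
      exact hkey
    refine le_trans (ENNReal.ofReal_le_ofReal hreal) (le_of_eq ?_)
    have hnn : ∀ s : Option (Fin n) → Bool,
        (0:ℝ) ≤ (∑ i, (if s i then (1:ℝ) else -1) * c i) ^ (2*q) :=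
      fun s => (even_two_mul q).pow_nonneg _
    rw [ENNReal.ofReal_mul (by positivity), ENNReal.ofReal_sum_of_nonneg (fun s _ => hnn s),
      Finset.mul_sum]
    refine Finset.sum_congr rfl (fun s _ => ?_)
    congr 1
    rw [ENNReal.ofReal_pow (by norm_num), ENNReal.ofReal_inv_of_pos (by norm_num)]
    norm_num
  -- main inequality at the level of lower Lebesgue integrals
  have hmain :
      ∑ k, ∫⁻ ω, ENNReal.ofReal (A k ω ^ (2*q)) ∂μ + ∫⁻ ω, ENNReal.ofReal (B ω ^ (2*q)) ∂μ
        ≤ ∫⁻ ω, ENNReal.ofReal ((∑ k, σ k ω * A k ω + ε ω * B ω) ^ (2*q)) ∂μ := by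
    have hR : ∫⁻ ω, ENNReal.ofReal ((∑ k, σ k ω * A k ω + ε ω * B ω) ^ (2*q)) ∂μ
        = ∫⁻ y, ∫⁻ x, ENNReal.ofReal ((∑ k, x (some k) * y.1 k + x none * y.2) ^ (2*q))
            ∂(Measure.pi (fun _ : Option (Fin n) => rademacherLaw)) ∂ν := by
      have h1 : ∫⁻ ω, ENNReal.ofReal ((∑ k, σ k ω * A k ω + ε ω * B ω) ^ (2*q)) ∂μ
          = ∫⁻ p, ENNReal.ofReal ((∑ k, p.1 (some k) * p.2.1 k + p.1 none * p.2.2) ^ (2*q))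
              ∂(μ.map (fun ω => ((fun i : Option (Fin n) => Option.elim i ε σ ω),
                  ((fun k => A k ω), B ω)))) :=
        (lintegral_map (ENNReal.measurable_ofReal.comp hg0m) (hFm.prodMk hGm)).symm
      rw [h1, hmappair, hmapF]
      exact lintegral_prod_symm _ ((ENNReal.measurable_ofReal.comp hg0m).aemeasurable)
    have hL : ∑ k, ∫⁻ ω, ENNReal.ofReal (A k ω ^ (2*q)) ∂μ
          + ∫⁻ ω, ENNReal.ofReal (B ω ^ (2*q)) ∂μ
        = ∫⁻ y : (Fin n → ℝ) × ℝ, ENNReal.ofReal (∑ k, y.1 k ^ (2*q) + y.2 ^ (2*q)) ∂ν := by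
      have hym : Measurable (fun y : (Fin n → ℝ) × ℝ =>
          ENNReal.ofReal (∑ k, y.1 k ^ (2*q) + y.2 ^ (2*q))) := by
        apply ENNReal.measurable_ofReal.comp
        apply Measurable.add
        · exact Finset.measurable_sum _ (fun k _ =>
            ((measurable_pi_apply k).comp measurable_fst).pow_const _)
        · exact measurable_snd.pow_const _
      rw [hν, lintegral_map hym hGm]
      have hpt : ∀ ω, ENNReal.ofReal (∑ k, A k ω ^ (2*q) + B ω ^ (2*q))
          = ∑ k, ENNReal.ofReal (A k ω ^ (2*q)) + ENNReal.ofReal (B ω ^ (2*q)) := by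
        intro ω
        rw [ENNReal.ofReal_add (Finset.sum_nonneg (fun k _ => (even_two_mul q).pow_nonneg _))
          ((even_two_mul q).pow_nonneg _),
          ENNReal.ofReal_sum_of_nonneg (fun k _ => (even_two_mul q).pow_nonneg _)]
      simp only [hpt]
      rw [lintegral_add_right _ (hBm.pow_const _).ennreal_ofReal,
        lintegral_finset_sum _ (fun k _ => ((hAm k).pow_const _).ennreal_ofReal)]
    rw [hL, hR]
    exact lintegral_mono hinner
  -- finiteness of all the lower integrals
  have hσae : ∀ i : Option (Fin n), ∀ᵐ ω ∂μ, Option.elim i ε σ ω = 1 ∨ Option.elim i ε σ ω = -1 := by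
    intro i
    have hset : MeasurableSet {x : ℝ | x = 1 ∨ x = -1} := by
      have : {x : ℝ | x = 1 ∨ x = -1} = {1, -1} := by ext x; simp
      rw [this]
      exact (measurableSet_singleton (-1 : ℝ)).insert 1
    have hae : ∀ᵐ x ∂(μ.map (Option.elim i ε σ)), x = 1 ∨ x = -1 := by
      rw [hrad i, ae_iff]
      have hsetc : MeasurableSet {x : ℝ | ¬(x = 1 ∨ x = -1)} := hset.compl
      rw [rademacherLaw, Measure.add_apply, Measure.smul_apply, Measure.smul_apply,
        Measure.dirac_apply' _ hsetc, Measure.dirac_apply' _ hsetc]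
      simp [Set.indicator_apply]
    exact (ae_map_iff (hm i).aemeasurable hset).mp hae
  have hterm : ∀ k, MemLp (fun ω => σ k ω * A k ω) (2 * q : ℕ) μ := by
    intro k
    refine (hALp k).of_le ((hσm k).mul (hAm k)).aestronglyMeasurable ?_
    filter_upwards [hσae (some k)] with ω hω
    have : Option.elim (some k) ε σ ω = σ k ω := rfl
    rw [this] at hω
    rcases hω with h | h <;> simp [Real.norm_eq_abs, abs_mul, h]
  have hεB : MemLp (fun ω => ε ω * B ω) (2 * q : ℕ) μ := by
    refine hBLp.of_le (hεm.mul hBm).aestronglyMeasurable ?_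
    filter_upwards [hσae none] with ω hω
    have : Option.elim none ε σ ω = ε ω := rfl
    rw [this] at hω
    rcases hω with h | h <;> simp [Real.norm_eq_abs, abs_mul, h]
  have hXmem : MemLp (fun ω => ∑ k, σ k ω * A k ω + ε ω * B ω) (2 * q : ℕ) μ := by
    have hs : MemLp (fun ω => ∑ k, σ k ω * A k ω) (2 * q : ℕ) μ := by
      have h0 := memLp_finset_sum' (μ := μ) Finset.univ (fun k (_ : k ∈ Finset.univ) => hterm k)
      have he : (∑ k : Fin n, fun ω => σ k ω * A k ω) = fun ω => ∑ k, σ k ω * A k ω := by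
        funext ω; simp [Finset.sum_apply]
      rwa [he] at h0
    exact hs.add hεB
  have hfinX : ∫⁻ ω, ENNReal.ofReal ((∑ k, σ k ω * A k ω + ε ω * B ω) ^ (2*q)) ∂μ ≠ ⊤ :=
    (lintegral_pow_lt_top q hq hXmem).ne
  have hfinA : ∀ k, ∫⁻ ω, ENNReal.ofReal (A k ω ^ (2*q)) ∂μ ≠ ⊤ :=
    fun k => (lintegral_pow_lt_top q hq (hALp k)).ne
  have hfinB : ∫⁻ ω, ENNReal.ofReal (B ω ^ (2*q)) ∂μ ≠ ⊤ :=
    (lintegral_pow_lt_top q hq hBLp).ne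
  -- convert the Bochner integrals to lower integrals
  have hintA : ∀ k, ∫ ω, (A k ω) ^ (2 * q) ∂μ
      = (∫⁻ ω, ENNReal.ofReal (A k ω ^ (2*q)) ∂μ).toReal := fun k =>
    integral_eq_lintegral_of_nonneg_ae
      (Filter.Eventually.of_forall (fun ω => (even_two_mul q).pow_nonneg _))
      ((hAm k).pow_const _).aestronglyMeasurable
  have hintB : ∫ ω, (B ω) ^ (2 * q) ∂μ
      = (∫⁻ ω, ENNReal.ofReal (B ω ^ (2*q)) ∂μ).toReal :=
    integral_eq_lintegral_of_nonneg_ae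
      (Filter.Eventually.of_forall (fun ω => (even_two_mul q).pow_nonneg _))
      (hBm.pow_const _).aestronglyMeasurable
  have hintX : ∫ ω, (∑ k, σ k ω * A k ω + ε ω * B ω) ^ (2 * q) ∂μ
      = (∫⁻ ω, ENNReal.ofReal ((∑ k, σ k ω * A k ω + ε ω * B ω) ^ (2*q)) ∂μ).toReal :=
    integral_eq_lintegral_of_nonneg_ae
      (Filter.Eventually.of_forall (fun ω => (even_two_mul q).pow_nonneg _))
      hXpm.aestronglyMeasurable
  rw [hintB, hintX, Finset.sum_congr rfl (fun k _ => hintA k)]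
  rw [← ENNReal.toReal_sum (fun k _ => hfinA k),
    ← ENNReal.toReal_add (by exact (ENNReal.sum_lt_top.mpr (fun k _ => (hfinA k).lt_top)).ne) hfinB]
  exact ENNReal.toReal_mono hfinX hmain
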